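/- Let p ∈ (2, 3), λ > 0, and let f(t) solve the ODE df/dt = λ A f on ℝ² with A = [[−1, 1], [1, −1]] and initial datum f^I having nonnegative entries with f_1^I + f_2^I = 1, so the steady state is f^∞ = (1/2, 1/2). Then the relative entropy e_p generated by ψ_p(σ) = σ^p − 1 − p(σ − 1) satisfies e_p(f(t)|f^∞) ≤ e^{−(p+1)λ t} · e_p(f^I|f^∞) for all t ≥ 0. -/

import Mathlib

open Real Set


noncomputable def gg (p u : ℝ) : ℝ := (1+u)^p + (1-u)^p - 2
noncomputable def gd1 (p u : ℝ) : ℝ := p*((1+u)^(p-1) - (1-u)^(p-1))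
noncomputable def gd2 (p u : ℝ) : ℝ := p*(p-1)*((1+u)^(p-2) + (1-u)^(p-2))
noncomputable def gd3 (p u : ℝ) : ℝ := p*(p-1)*(p-2)*((1+u)^(p-3) - (1-u)^(p-3))
noncomputable def gd4 (p u : ℝ) : ℝ := p*(p-1)*(p-2)*(p-3)*((1+u)^(p-4) + (1-u)^(p-4))

private lemma aux_mono {F F' : ℝ → ℝ}
    (hF : ∀ u ∈ Set.Ico (0:ℝ) 1, HasDerivAt F (F' u) u)
    (h' : ∀ u ∈ Set.Ico (0:ℝ) 1, 0 ≤ F' u)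
    {u : ℝ} (hu : u ∈ Set.Ico (0:ℝ) 1) : F 0 ≤ F u := by
  have hsub : Set.Icc (0:ℝ) u ⊆ Set.Ico (0:ℝ) 1 :=
    fun x hx => ⟨hx.1, lt_of_le_of_lt hx.2 hu.2⟩
  have hmono : MonotoneOn F (Set.Icc (0:ℝ) u) := by
    apply monotoneOn_of_deriv_nonneg (convex_Icc 0 u)
    · exact fun x hx => (hF x (hsub hx)).continuousAt.continuousWithinAt
    · intro x hx
      rw [interior_Icc] at hx
      exact (hF x (hsub (Set.Ioo_subset_Icc_self hx))).differentiableAt.differentiableWithinAt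
    · intro x hx
      rw [interior_Icc] at hx
      rw [(hF x (hsub (Set.Ioo_subset_Icc_self hx))).deriv]
      exact h' x (hsub (Set.Ioo_subset_Icc_self hx))
  exact hmono (Set.left_mem_Icc.2 hu.1) (Set.right_mem_Icc.2 hu.1) hu.1

private lemma aux_mono_Ioc {F F' : ℝ → ℝ}
    (hc : ContinuousOn F (Set.Ioc (0:ℝ) 1))
    (hF : ∀ u ∈ Set.Ioo (0:ℝ) 1, HasDerivAt F (F' u) u)
    (h' : ∀ u ∈ Set.Ioo (0:ℝ) 1, 0 ≤ F' u) : MonotoneOn F (Set.Ioc (0:ℝ) 1) := by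
  apply monotoneOn_of_deriv_nonneg (convex_Ioc 0 1) hc
  · intro x hx; rw [interior_Ioc] at hx
    exact (hF x hx).differentiableAt.differentiableWithinAt
  · intro x hx; rw [interior_Ioc] at hx
    rw [(hF x hx).deriv]; exact h' x hx

private lemma hasDerivAt_plus (a : ℝ) {u : ℝ} (h2 : -1 < u) (h1 : u < 1) :
    HasDerivAt (fun u : ℝ => (1+u)^a + (1-u)^a) (a*((1+u)^(a-1) - (1-u)^(a-1))) u := by
  have hin1 : HasDerivAt (fun u : ℝ => 1+u) 1 u := (hasDerivAt_id u).const_add 1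
  have hin2 : HasDerivAt (fun u : ℝ => 1-u) (-1) u := by
    exact (hasDerivAt_id u).const_sub 1
  have hp : HasDerivAt (fun u : ℝ => (1+u)^a) (a*(1+u)^(a-1)) u := by
    have := (Real.hasDerivAt_rpow_const (x := 1+u) (p := a)
      (Or.inl (by linarith))).comp u hin1
    exact this.congr_deriv (by ring)
  have hm : HasDerivAt (fun u : ℝ => (1-u)^a) (a*(1-u)^(a-1)*(-1)) u := by
    have := (Real.hasDerivAt_rpow_const (x := 1-u) (p := a)
      (Or.inl (by linarith))).comp u hin2
    exact this
  refine (hp.add hm).congr_deriv ?_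
  ring

private lemma hasDerivAt_minus (a : ℝ) {u : ℝ} (h2 : -1 < u) (h1 : u < 1) :
    HasDerivAt (fun u : ℝ => (1+u)^a - (1-u)^a) (a*((1+u)^(a-1) + (1-u)^(a-1))) u := by
  have hin1 : HasDerivAt (fun u : ℝ => 1+u) 1 u := (hasDerivAt_id u).const_add 1
  have hin2 : HasDerivAt (fun u : ℝ => 1-u) (-1) u := by
    exact (hasDerivAt_id u).const_sub 1
  have hp : HasDerivAt (fun u : ℝ => (1+u)^a) (a*(1+u)^(a-1)) u := by
    have := (Real.hasDerivAt_rpow_const (x := 1+u) (p := a)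
      (Or.inl (by linarith))).comp u hin1
    exact this.congr_deriv (by ring)
  have hm : HasDerivAt (fun u : ℝ => (1-u)^a) (a*(1-u)^(a-1)*(-1)) u := by
    have := (Real.hasDerivAt_rpow_const (x := 1-u) (p := a)
      (Or.inl (by linarith))).comp u hin2
    exact this
  refine (hp.sub hm).congr_deriv ?_
  ring

private lemma hasDerivAt_gg (p : ℝ) {u : ℝ} (h2 : -1 < u) (h1 : u < 1) :
    HasDerivAt (gg p) (gd1 p u) u := by
  have := (hasDerivAt_plus p h2 h1).sub_const 2
  exact this

private lemma hasDerivAt_gd1 (p : ℝ) {u : ℝ} (h2 : -1 < u) (h1 : u < 1) :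
    HasDerivAt (gd1 p) (gd2 p u) u := by
  have h := (hasDerivAt_minus (p-1) h2 h1).const_mul p
  have e1 : gd1 p = fun y : ℝ => p * ((1+y)^(p-1) - (1-y)^(p-1)) := rfl
  rw [e1]
  refine h.congr_deriv ?_
  rw [show p-1-1 = p-2 by ring]
  simp only [gd2]; ring

private lemma hasDerivAt_gd2 (p : ℝ) {u : ℝ} (h2 : -1 < u) (h1 : u < 1) :
    HasDerivAt (gd2 p) (gd3 p u) u := by
  have h := (hasDerivAt_plus (p-2) h2 h1).const_mul (p*(p-1))
  have e1 : gd2 p = fun y : ℝ => p*(p-1) * ((1+y)^(p-2) + (1-y)^(p-2)) := rfl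
  rw [e1]
  refine h.congr_deriv ?_
  rw [show p-2-1 = p-3 by ring]
  simp only [gd3]; ring

private lemma hasDerivAt_gd3 (p : ℝ) {u : ℝ} (h2 : -1 < u) (h1 : u < 1) :
    HasDerivAt (gd3 p) (gd4 p u) u := by
  have h := (hasDerivAt_minus (p-3) h2 h1).const_mul (p*(p-1)*(p-2))
  have e1 : gd3 p = fun y : ℝ => p*(p-1)*(p-2) * ((1+y)^(p-3) - (1-y)^(p-3)) := rfl
  rw [e1]
  refine h.congr_deriv ?_
  rw [show p-3-1 = p-4 by ring]
  simp only [gd4]; ring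

private lemma gd3_nonpos {p : ℝ} (hp2 : 2 < p) (hp3 : p < 3) {u : ℝ} (hu0 : 0 ≤ u) (hu1 : u < 1) : gd3 p u ≤ 0 := by
  have hb : (1+u)^(p-3) ≤ (1-u)^(p-3) :=
    Real.rpow_le_rpow_of_nonpos (by linarith) (by linarith) (by linarith)
  have hco : 0 ≤ p*(p-1)*(p-2) :=
    le_of_lt (mul_pos (mul_pos (by linarith) (by linarith)) (by linarith))
  have : (1+u)^(p-3) - (1-u)^(p-3) ≤ 0 := by linarith
  exact mul_nonpos_of_nonneg_of_nonpos hco this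

private lemma gd4_nonpos {p : ℝ} (hp2 : 2 < p) (hp3 : p < 3) {u : ℝ} (hu0 : 0 ≤ u) (hu1 : u < 1) : gd4 p u ≤ 0 := by
  have h1 : (0:ℝ) ≤ (1+u)^(p-4) := Real.rpow_nonneg (by linarith) _
  have h2 : (0:ℝ) ≤ (1-u)^(p-4) := Real.rpow_nonneg (by linarith) _
  have hco : p*(p-1)*(p-2)*(p-3) ≤ 0 :=
    mul_nonpos_of_nonneg_of_nonpos
      (le_of_lt (mul_pos (mul_pos (by linarith) (by linarith)) (by linarith))) (by linarith)
  exact mul_nonpos_of_nonpos_of_nonneg hco (by linarith)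

private lemma gg_zero (p : ℝ) : gg p 0 = 0 := by norm_num [gg]
private lemma gd1_zero (p : ℝ) : gd1 p 0 = 0 := by simp [gd1]

section chain

private lemma dd_nonneg {p : ℝ} (hp2 : 2 < p) (hp3 : p < 3) : ∀ u ∈ Set.Ico (0:ℝ) 1, 0 ≤ gd1 p u - u * gd2 p u := by
  intro u hu
  have h0 : gd1 p 0 - 0 * gd2 p 0 ≤ gd1 p u - u * gd2 p u := by
    refine aux_mono (F := fun u => gd1 p u - u * gd2 p u)
      (F' := fun u => -(u * gd3 p u)) ?_ ?_ hu
    · intro v hv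
      have h := (hasDerivAt_gd1 p (by linarith [hv.1]) hv.2).sub
        ((hasDerivAt_id v).mul (hasDerivAt_gd2 p (by linarith [hv.1]) hv.2))
      refine h.congr_deriv ?_; simp only [id_eq]; ring
    · intro v hv
      have := gd3_nonpos hp2 hp3 hv.1 hv.2
      have : v * gd3 p v ≤ 0 := mul_nonpos_of_nonneg_of_nonpos hv.1 this
      linarith
  simp [gd1_zero] at h0
  linarith

private lemma cc_nonneg {p : ℝ} (hp2 : 2 < p) (hp3 : p < 3) : ∀ u ∈ Set.Ico (0:ℝ) 1, 0 ≤ 2 * gg p u - u * gd1 p u := by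
  intro u hu
  have h0 : 2 * gg p 0 - 0 * gd1 p 0 ≤ 2 * gg p u - u * gd1 p u := by
    refine aux_mono (F := fun u => 2 * gg p u - u * gd1 p u)
      (F' := fun u => gd1 p u - u * gd2 p u) ?_ ?_ hu
    · intro v hv
      have h := ((hasDerivAt_gg p (by linarith [hv.1]) hv.2).const_mul 2).sub
        ((hasDerivAt_id v).mul (hasDerivAt_gd1 p (by linarith [hv.1]) hv.2))
      refine h.congr_deriv ?_; simp only [id_eq]; ring
    · exact dd_nonneg hp2 hp3
  simp [gg_zero, gd1_zero] at h0
  linarith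

private lemma QQ_nonpos {p : ℝ} (hp2 : 2 < p) (hp3 : p < 3) : ∀ u ∈ Set.Ico (0:ℝ) 1,
    u*u*gd3 p u - u*gd2 p u + gd1 p u ≤ 0 := by
  intro u hu
  have h0 : -(0*0*gd3 p 0 - 0*gd2 p 0 + gd1 p 0) ≤
      -(u*u*gd3 p u - u*gd2 p u + gd1 p u) := by
    refine aux_mono (F := fun u => -(u*u*gd3 p u - u*gd2 p u + gd1 p u))
      (F' := fun v => -(v * gd3 p v + v*v* gd4 p v)) ?_ ?_ hu
    · intro v hv
      have hv1 : -1 < v := by linarith [hv.1]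
      have h := ((((hasDerivAt_id v).mul (hasDerivAt_id v)).mul
          (hasDerivAt_gd3 p hv1 hv.2)).sub
          ((hasDerivAt_id v).mul (hasDerivAt_gd2 p hv1 hv.2))).add
          (hasDerivAt_gd1 p hv1 hv.2)
      refine h.neg.congr_deriv ?_; simp only [id_eq, Pi.mul_apply]; ring
    · intro v hv
      have h3 := gd3_nonpos hp2 hp3 hv.1 hv.2
      have h4 := gd4_nonpos hp2 hp3 hv.1 hv.2
      have a1 : v * gd3 p v ≤ 0 := mul_nonpos_of_nonneg_of_nonpos hv.1 h3
      have a2 : v*v*gd4 p v ≤ 0 :=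
        mul_nonpos_of_nonneg_of_nonpos (mul_nonneg hv.1 hv.1) h4
      linarith
  simp [gd1_zero] at h0
  linarith

private lemma PP_nonpos {p : ℝ} (hp2 : 2 < p) (hp3 : p < 3) : ∀ u ∈ Set.Ico (0:ℝ) 1,
    u*u*gd2 p u - 3*u*gd1 p u + 4*gg p u ≤ 0 := by
  intro u hu
  have h0 : -(0*0*gd2 p 0 - 3*0*gd1 p 0 + 4*gg p 0) ≤
      -(u*u*gd2 p u - 3*u*gd1 p u + 4*gg p u) := by
    refine aux_mono (F := fun u => -(u*u*gd2 p u - 3*u*gd1 p u + 4*gg p u))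
      (F' := fun v => -(v*v*gd3 p v - v*gd2 p v + gd1 p v)) ?_ ?_ hu
    · intro v hv
      have hv1 : -1 < v := by linarith [hv.1]
      have h := ((((hasDerivAt_id v).mul (hasDerivAt_id v)).mul
          (hasDerivAt_gd2 p hv1 hv.2)).sub
          (((hasDerivAt_id v).const_mul 3).mul (hasDerivAt_gd1 p hv1 hv.2))).add
          ((hasDerivAt_gg p hv1 hv.2).const_mul 4)
      refine h.neg.congr_deriv ?_; simp only [id_eq, Pi.mul_apply]; ring
    · intro v hv
      have := QQ_nonpos hp2 hp3 v hv
      linarith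
  simp [gg_zero, gd1_zero] at h0
  linarith

end chain

private lemma cont_gg {p : ℝ} (hp2 : 2 < p) : Continuous (gg p) := by
  have h1 : Continuous (fun u : ℝ => (1+u)^p) :=
    (Real.continuous_rpow_const (by linarith)).comp (continuous_const.add continuous_id)
  have h2 : Continuous (fun u : ℝ => (1-u)^p) :=
    (Real.continuous_rpow_const (by linarith)).comp (continuous_const.sub continuous_id)
  exact ((h1.add h2).sub continuous_const)

private lemma cont_gd1 {p : ℝ} (hp2 : 2 < p) : Continuous (gd1 p) := by
  have h1 : Continuous (fun u : ℝ => (1+u)^(p-1)) :=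
    (Real.continuous_rpow_const (by linarith)).comp (continuous_const.add continuous_id)
  have h2 : Continuous (fun u : ℝ => (1-u)^(p-1)) :=
    (Real.continuous_rpow_const (by linarith)).comp (continuous_const.sub continuous_id)
  exact continuous_const.mul (h1.sub h2)

private lemma sq_ne {u : ℝ} (hu : u ∈ Set.Ioc (0:ℝ) 1) : u * u ≠ 0 :=
  ne_of_gt (mul_pos hu.1 hu.1)

private lemma gg_lower {p : ℝ} (hp2 : 2 < p) (hp3 : p < 3) {u : ℝ}
    (hu : u ∈ Set.Ioc (0:ℝ) 1) : gg p 1 * (u*u) ≤ gg p u := by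
  have hmono : MonotoneOn (fun u => -(gg p u / (u*u))) (Set.Ioc (0:ℝ) 1) := by
    apply aux_mono_Ioc (F' := fun u =>
      -((gd1 p u * (u*u) - gg p u * (1*u + u*1)) / (u*u)^2))
    · exact (((cont_gg hp2).continuousOn).div
        (continuous_id.mul continuous_id).continuousOn
        (fun x hx => sq_ne hx)).neg
    · intro v hv
      exact ((hasDerivAt_gg p (by linarith [hv.1]) hv.2).div
        ((hasDerivAt_id v).mul (hasDerivAt_id v))
        (sq_ne ⟨hv.1, hv.2.le⟩)).neg
    · intro v hv
      have hc := cc_nonneg hp2 hp3 v ⟨hv.1.le, hv.2⟩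
      have hnum : gd1 p v * (v*v) - gg p v * (1*v + v*1) ≤ 0 := by nlinarith [hv.1]
      have hden : (0:ℝ) ≤ (v*v)^2 := by positivity
      have := div_nonpos_of_nonpos_of_nonneg hnum hden
      simp only [neg_nonneg]
      exact this
  have h := hmono hu (Set.mem_Ioc.2 ⟨zero_lt_one, le_refl 1⟩) hu.2
  dsimp only at h
  rw [neg_le_neg_iff] at h
  have h1 : gg p 1 / (1*1 : ℝ) = gg p 1 := by norm_num
  rw [h1] at h
  calc gg p 1 * (u*u) ≤ (gg p u / (u*u)) * (u*u) :=
        mul_le_mul_of_nonneg_right h (mul_nonneg hu.1.le hu.1.le)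
    _ = gg p u := div_mul_cancel₀ _ (sq_ne hu)
  
private lemma cc_upper {p : ℝ} (hp2 : 2 < p) (hp3 : p < 3) {u : ℝ}
    (hu : u ∈ Set.Ioc (0:ℝ) 1) :
    2 * gg p u - u * gd1 p u ≤ (2 * gg p 1 - gd1 p 1) * (u*u) := by
  have hmono : MonotoneOn (fun u => (2 * gg p u - u * gd1 p u) / (u*u))
      (Set.Ioc (0:ℝ) 1) := by
    apply aux_mono_Ioc (F' := fun u =>
      ((gd1 p u - u * gd2 p u) * (u*u) - (2 * gg p u - u * gd1 p u) * (1*u + u*1)) / (u*u)^2)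
    · apply ContinuousOn.div
      · exact ((continuous_const.mul (cont_gg hp2)).sub
          (continuous_id.mul (cont_gd1 hp2))).continuousOn
      · exact (continuous_id.mul continuous_id).continuousOn
      · exact fun x hx => sq_ne hx
    · intro v hv
      have hv1 : (-1:ℝ) < v := by linarith [hv.1]
      have hnum : HasDerivAt (fun u : ℝ => 2 * gg p u - u * gd1 p u)
          (gd1 p v - v * gd2 p v) v := by
        have h := ((hasDerivAt_gg p hv1 hv.2).const_mul 2).sub
          ((hasDerivAt_id v).mul (hasDerivAt_gd1 p hv1 hv.2))
        refine h.congr_deriv ?_; simp only [id_eq]; ring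
      exact hnum.div ((hasDerivAt_id v).mul (hasDerivAt_id v)) (sq_ne ⟨hv.1, hv.2.le⟩)

    · intro v hv
      have hP := PP_nonpos hp2 hp3 v ⟨hv.1.le, hv.2⟩
      have hnum : 0 ≤ (gd1 p v - v * gd2 p v) * (v*v)
          - (2 * gg p v - v * gd1 p v) * (1*v + v*1) := by nlinarith [hv.1]
      have hden : (0:ℝ) ≤ (v*v)^2 := by positivity
      exact div_nonneg hnum hden
  have h := hmono hu (Set.mem_Ioc.2 ⟨zero_lt_one, le_refl 1⟩) hu.2
  dsimp only at h
  rw [show ((1:ℝ)*1) = 1 by norm_num, div_one] at h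
  calc 2 * gg p u - u * gd1 p u
      = ((2 * gg p u - u * gd1 p u) / (u*u)) * (u*u) :=
        (div_mul_cancel₀ _ (sq_ne hu)).symm
    _ ≤ (2 * gg p 1 - 1 * gd1 p 1) * (u*u) :=
        mul_le_mul_of_nonneg_right h (mul_nonneg hu.1.le hu.1.le)
    _ = (2 * gg p 1 - gd1 p 1) * (u*u) := by ring

-- values at 1
private lemma gg_one {p : ℝ} (hp2 : 2 < p) : gg p 1 = (2:ℝ)^p - 2 := by
  have h0 : ((0:ℝ))^p = 0 := Real.zero_rpow (by linarith)
  simp only [gg]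
  norm_num [h0]

private lemma gd1_one {p : ℝ} (hp2 : 2 < p) : gd1 p 1 = p * (2:ℝ)^(p-1) := by
  have h0 : ((0:ℝ))^(p-1) = 0 := Real.zero_rpow (by linarith)
  simp only [gd1]
  norm_num [h0]

-- 2^(p-1) ≤ p + 1 for p ∈ (2,3)
private lemma two_rpow_le {p : ℝ} (hp2 : 2 < p) (hp3 : p < 3) :
    (2:ℝ)^(p-1) ≤ p + 1 := by
  have hkey : (2:ℝ)^(p-1) ≤ 2*p - 2 := by
    have hc := convexOn_exp.2 (Set.mem_univ (Real.log 2)) (Set.mem_univ (2 * Real.log 2))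
      (by linarith : (0:ℝ) ≤ 3 - p) (by linarith : (0:ℝ) ≤ p - 2) (by ring)
    have e1 : (3-p) • Real.log 2 + (p-2) • (2 * Real.log 2) = (p-1) * Real.log 2 := by
      simp only [smul_eq_mul]; ring
    have e2 : Real.exp (Real.log 2) = 2 := Real.exp_log (by norm_num)
    have e3 : Real.exp (2 * Real.log 2) = 4 := by
      rw [two_mul, Real.exp_add, e2]; norm_num
    rw [e1, e2, e3] at hc
    simp only [smul_eq_mul] at hc
    have e4 : (2:ℝ)^(p-1) = Real.exp ((p-1) * Real.log 2) := by
      rw [Real.rpow_def_of_pos (by norm_num : (0:ℝ) < 2)]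
      ring_nf
    rw [e4]
    linarith
  linarith

-- H(1) ≥ 0
private lemma H_one_nonneg {p : ℝ} (hp2 : 2 < p) (hp3 : p < 3) :
    0 ≤ 2 * gd1 p 1 - (p+1) * gg p 1 := by
  rw [gg_one hp2, gd1_one hp2]
  have h2p : (2:ℝ)^p = 2 * (2:ℝ)^(p-1) := by
    have h := Real.rpow_add (show (0:ℝ) < 2 by norm_num) (p-1) 1
    rw [sub_add_cancel] at h
    rw [h, Real.rpow_one]; ring
  rw [h2p]
  have := two_rpow_le hp2 hp3
  have hE : (0:ℝ) ≤ (2:ℝ)^(p-1) := Real.rpow_nonneg (by norm_num) _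
  nlinarith

-- H(u) ≥ 0 on Ioc 0 1
private lemma H_nonneg {p : ℝ} (hp2 : 2 < p) (hp3 : p < 3) {u : ℝ}
    (hu : u ∈ Set.Ioc (0:ℝ) 1) :
    0 ≤ 2 * (u * gd1 p u) - (p+1) * gg p u := by
  have h1 := gg_lower hp2 hp3 hu
  have h2 := cc_upper hp2 hp3 hu
  have h3 := H_one_nonneg hp2 hp3
  have husq : 0 ≤ u * u := mul_nonneg hu.1.le hu.1.le
  -- 2u g1 - (p+1) g = (3-p) g - 2(2g - u g1) ≥ (3-p) gg1 u² - 2(2gg1 - gd1 1)u² = u² H(1)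
  have key : (3-p) * gg p u ≥ (3-p) * (gg p 1 * (u*u)) :=
    mul_le_mul_of_nonneg_left h1 (by linarith)
  nlinarith [mul_nonneg husq h3]

private lemma m_mono {p : ℝ} (hp2 : 2 < p) (hp3 : p < 3) :
    MonotoneOn (fun u => gg p u / u^((p+1)/2)) (Set.Ioc (0:ℝ) 1) := by
  set c := (p+1)/2 with hc
  apply aux_mono_Ioc (F' := fun u =>
    (gd1 p u * u^c - gg p u * (c * u^(c-1))) / (u^c)^2)
  · apply ContinuousOn.div ((cont_gg hp2).continuousOn)
    · exact (Real.continuous_rpow_const (by linarith)).continuousOn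
    · exact fun x hx => (Real.rpow_pos_of_pos hx.1 _).ne'
  · intro v hv
    exact (hasDerivAt_gg p (by linarith [hv.1]) hv.2).div
      (Real.hasDerivAt_rpow_const (Or.inl hv.1.ne')) (Real.rpow_pos_of_pos hv.1 _).ne'
  · intro v hv
    have hfact : v^c = v^(c-1) * v := by
      have h := Real.rpow_add hv.1 (c-1) 1
      rw [sub_add_cancel] at h
      rw [h, Real.rpow_one]
    have hH := H_nonneg hp2 hp3 (⟨hv.1, hv.2.le⟩ : v ∈ Set.Ioc (0:ℝ) 1)
    have hnum : 0 ≤ gd1 p v * v^c - gg p v * (c * v^(c-1)) := by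
      rw [hfact]
      have e : gd1 p v * (v^(c-1) * v) - gg p v * (c * v^(c-1))
          = v^(c-1) * (v * gd1 p v - c * gg p v) := by ring
      rw [e]
      apply mul_nonneg (Real.rpow_nonneg hv.1.le _)
      rw [hc]; linarith
    exact div_nonneg hnum (by positivity)

private lemma key_ineq {p : ℝ} (hp2 : 2 < p) (hp3 : p < 3) {s b : ℝ}
    (hs0 : 0 < s) (hs1 : s ≤ 1) (hb0 : 0 < b) (hb1 : b ≤ 1) :
    gg p (s*b) ≤ s^((p+1)/2) * gg p b := by
  set c := (p+1)/2 with hc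
  have ha0 : 0 < s*b := mul_pos hs0 hb0
  have hab : s*b ≤ b := by nlinarith
  have h := m_mono hp2 hp3 (Set.mem_Ioc.2 ⟨ha0, hab.trans hb1⟩)
    (Set.mem_Ioc.2 ⟨hb0, hb1⟩) hab
  dsimp only at h
  have hbpos : 0 < b^c := Real.rpow_pos_of_pos hb0 _
  have hapos : 0 < (s*b)^c := Real.rpow_pos_of_pos ha0 _
  rw [div_le_div_iff₀ hapos hbpos] at h
  have hmul : (s*b)^c = s^c * b^c := Real.mul_rpow hs0.le hb0.le
  calc gg p (s*b) = gg p (s*b) * b^c / b^c := by field_simp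
    _ ≤ gg p b * (s*b)^c / b^c := by
        rw [div_le_div_iff_of_pos_right hbpos]
        exact h
    _ = s^c * gg p b := by rw [hmul]; field_simp

private lemma ode_sol
    (lam : ℝ)
    (fI : ℝ × ℝ) (hIsum : fI.1 + fI.2 = 1)
    (f : ℝ → ℝ × ℝ)
    (hf0 : f 0 = fI)
    (hode : ∀ t : ℝ, HasDerivAt f (lam • (-(f t).1 + (f t).2, (f t).1 - (f t).2)) t) :
    ∀ t : ℝ, (f t).1 = 1/2 + (fI.1 - 1/2) * Real.exp (-(2*lam)*t) ∧
             (f t).2 = 1/2 - (fI.1 - 1/2) * Real.exp (-(2*lam)*t) := by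
  have h1 : ∀ t, HasDerivAt (fun t => (f t).1) (lam * (-(f t).1 + (f t).2)) t := by
    intro t
    have := ((hode t).hasFDerivAt.fst).hasDerivAt
    simpa using this
  have h2 : ∀ t, HasDerivAt (fun t => (f t).2) (lam * ((f t).1 - (f t).2)) t := by
    intro t
    have := ((hode t).hasFDerivAt.snd).hasDerivAt
    simpa using this
  -- sum is constant
  have hSd : ∀ t, HasDerivAt (fun t => (f t).1 + (f t).2) 0 t := by
    intro t
    have h := (h1 t).add (h2 t)
    refine h.congr_deriv ?_; ring
  have hS : ∀ t, (f t).1 + (f t).2 = 1 := by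
    intro t
    have := is_const_of_deriv_eq_zero (fun x => (hSd x).differentiableAt)
      (fun x => (hSd x).deriv) t 0
    rw [this, hf0, hIsum]
  -- difference decays
  have hexp : ∀ t : ℝ, HasDerivAt (fun t : ℝ => Real.exp (2*lam*t))
      (Real.exp (2*lam*t) * (2*lam)) t := by
    intro t
    have hin : HasDerivAt (fun t : ℝ => 2*lam*t) (2*lam) t := by
      simpa using (hasDerivAt_id t).const_mul (2*lam)
    exact (Real.hasDerivAt_exp (2*lam*t)).comp t hin
  have hDd : ∀ t, HasDerivAt (fun t => ((f t).1 - (f t).2) * Real.exp (2*lam*t)) 0 t := by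
    intro t
    have h := ((h1 t).sub (h2 t)).mul (hexp t)
    refine h.congr_deriv ?_; simp only [Pi.sub_apply]; ring
  have hD : ∀ t, ((f t).1 - (f t).2) * Real.exp (2*lam*t) = fI.1 - fI.2 := by
    intro t
    have := is_const_of_deriv_eq_zero (fun x => (hDd x).differentiableAt)
      (fun x => (hDd x).deriv) t 0
    rw [this, hf0]
    simp
  intro t
  have hSt := hS t
  have hDt := hD t
  have hI2 : fI.2 = 1 - fI.1 := by linarith
  have hene : Real.exp (2*lam*t) ≠ 0 := Real.exp_ne_zero _
  have hneg : Real.exp (-(2*lam)*t) = (Real.exp (2*lam*t))⁻¹ := by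
    rw [show -(2*lam)*t = -(2*lam*t) by ring, Real.exp_neg]
  constructor
  · have : (f t).1 - (f t).2 = (fI.1 - fI.2) * Real.exp (-(2*lam)*t) := by
      rw [hneg]
      field_simp
      linarith [hDt]
    rw [hI2] at this
    rw [hneg] at *
    linarith
  · have : (f t).1 - (f t).2 = (fI.1 - fI.2) * Real.exp (-(2*lam)*t) := by
      rw [hneg]
      field_simp
      linarith [hDt]
    rw [hI2] at this
    linarith
private lemma gg_neg (p x : ℝ) : gg p (-x) = gg p x := by
  simp only [gg]
  rw [show (1:ℝ)+(-x) = 1-x by ring, show (1:ℝ)-(-x) = 1+x by ring]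
  ring

/-- for `p ∈ (2,3)`, the relative entropy `e_p` generated by
`ψ_p(σ) = σ^p - 1 - p(σ-1)` decays at rate `(p+1)λ` along the two-velocity BGK ODE
`df/dt = λ A f` with `A = [[-1,1],[1,-1]]` and steady state `f^∞ = (1/2,1/2)`.
Here `e_p(f|f^∞) = ψ_p(2 f₁)·(1/2) + ψ_p(2 f₂)·(1/2)`. -/
theorem stmt_4
    (p : ℝ) (hp : p ∈ Set.Ioo (2:ℝ) 3)
    (lam : ℝ) (hlam : 0 < lam)
    (ψp : ℝ → ℝ) (hψp : ∀ σ : ℝ, ψp σ = σ ^ p - 1 - p * (σ - 1))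
    (fI : ℝ × ℝ) (hI1 : 0 ≤ fI.1) (hI2 : 0 ≤ fI.2) (hIsum : fI.1 + fI.2 = 1)
    (f : ℝ → ℝ × ℝ)
    (hf0 : f 0 = fI)
    (hode : ∀ t : ℝ, HasDerivAt f (lam • (-(f t).1 + (f t).2, (f t).1 - (f t).2)) t) :
    ∀ t : ℝ, 0 ≤ t →
      ψp (2 * (f t).1) * (1/2) + ψp (2 * (f t).2) * (1/2) ≤
        Real.exp (-((p + 1) * lam) * t) *
          (ψp (2 * fI.1) * (1/2) + ψp (2 * fI.2) * (1/2)) := by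
  obtain ⟨hp2, hp3⟩ := hp
  intro t ht
  obtain ⟨ha, hb⟩ := ode_sol lam fI hIsum f hf0 hode t
  set s := Real.exp (-(2*lam)*t) with hs
  have hs0 : 0 < s := Real.exp_pos _
  have hs1 : s ≤ 1 := by
    rw [hs]
    apply Real.exp_le_one_iff.2
    nlinarith
  set w0 := 2*fI.1 - 1 with hw0
  have h2f1 : 2*(f t).1 = 1 + w0 * s := by rw [ha]; ring
  have h2f2 : 2*(f t).2 = 1 - w0 * s := by rw [hb]; ring
  have eL : ψp (2*(f t).1) * (1/2) + ψp (2*(f t).2) * (1/2) = gg p (w0*s) * (1/2) := by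
    rw [h2f1, h2f2]
    simp only [hψp, gg]
    ring
  have eR : ψp (2*fI.1) * (1/2) + ψp (2*fI.2) * (1/2) = gg p w0 * (1/2) := by
    have e1 : 2*fI.1 = 1 + w0 := by rw [hw0]; ring
    have e2 : 2*fI.2 = 1 - w0 := by rw [hw0]; linarith
    rw [e1, e2]
    simp only [hψp, gg]
    ring
  rw [eL, eR]
  have hsc : Real.exp (-((p+1)*lam)*t) = s ^ ((p+1)/2) := by
    rw [hs, ← Real.exp_mul]
    congr 1; ring
  rw [hsc]
  have hw0le : |w0| ≤ 1 := by
    rw [hw0]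
    apply abs_le.2
    constructor <;> [linarith; linarith]
  rcases eq_or_lt_of_le (abs_nonneg w0) with h0 | hpos
  · -- w0 = 0
    have hz : w0 = 0 := by
      have := abs_eq_zero.1 h0.symm
      exact this
    rw [hz]
    have : gg p ((0:ℝ)*s) = 0 := by rw [zero_mul]; exact gg_zero p
    rw [this, gg_zero p]
    simp
  · -- |w0| > 0
    have key := key_ineq hp2 hp3 hs0 hs1 hpos hw0le
    have e1 : gg p (w0*s) = gg p (s*|w0|) := by
      rcases le_or_gt 0 w0 with hw | hw
      · rw [abs_of_nonneg hw, mul_comm]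
      · rw [abs_of_neg hw]
        rw [show w0*s = -(s*(-w0)) by ring, gg_neg]
    have e2 : gg p w0 = gg p (|w0|) := by
      rcases le_or_gt 0 w0 with hw | hw
      · rw [abs_of_nonneg hw]
      · rw [abs_of_neg hw, gg_neg]
    rw [e1, e2]
    linarith
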